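/- Let R be a commutative noetherian ring, a a proper ideal, and M an a-torsion R-module (every element of M is annihilated by some power of a). Then the R-module structure on M extends uniquely to an R̂-module structure, where R̂ is the a-adic completion, and the natural map M → R̂ ⊗_R M is an isomorphism when M is also injective over R. -/

import Mathlib

open scoped TensorProduct

noncomputable section
universe u

/-- `M` is `a`-torsion: every element is annihilated by a power of `a`. -/
def IsAdicTorsion (R : Type u) [CommRing R] (a : Ideal R) (M : Type u)
    [AddCommGroup M] [Module R M] : Prop :=
  ∀ x : M, ∃ n : ℕ, ∀ r ∈ a ^ n, r • x = 0

namespace AdicTorsionAux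

open AdicCompletion Submodule Function

variable {R : Type u} [CommRing R] {a : Ideal R}

theorem eval_transition {m n : ℕ} (h : m ≤ n) (x : AdicCompletion a R) :
    transitionMap a R h (eval a R n x) = eval a R m x :=
  x.property h

theorem transitionMap_mk {M : Type u} [AddCommGroup M] [Module R M] {m n : ℕ} (h : m ≤ n)
    (x : M) : transitionMap a M h (Submodule.Quotient.mk x) = Submodule.Quotient.mk x :=
  rfl

section KerEval

variable [IsNoetherianRing R]

/-- If `x` is in the kernel of `eval n`, then `x ∈ aⁿ • R̂`. -/
theorem ker_eval_le (n : ℕ) (x : AdicCompletion a R)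
    (hx : eval a R n x = 0) : x ∈ (a ^ n • ⊤ : Submodule R (AdicCompletion a R)) := by
  classical
  haveI hfin : Module.Finite R ↥(a ^ n : Ideal R) :=
    Module.Finite.iff_fg.mpr (IsNoetherian.noetherian _)
  obtain ⟨k, p, hp⟩ := Module.Finite.exists_fin' R ↥(a ^ n : Ideal R)
  set f : ↥(a ^ n : Ideal R) →ₗ[R] R := (a ^ n : Ideal R).subtype with hfdef
  set g : R →ₗ[R] R ⧸ (a ^ n • ⊤ : Submodule R R) :=
    Submodule.mkQ (a ^ n • ⊤ : Submodule R R) with hgdef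
  have hst : (a ^ n • ⊤ : Ideal R) = a ^ n := by ext y; simp
  have hexact : Function.Exact f g := by
    rw [LinearMap.exact_iff, Submodule.ker_mkQ, Submodule.range_subtype, hst]
  have hgx : AdicCompletion.map a g x = 0 := by
    ext m
    obtain ⟨w, hw⟩ := Submodule.Quotient.mk_surjective _ (x.val (max m n))
    have h1 : x.val m = Submodule.Quotient.mk w := by
      rw [← x.property (le_max_left m n), ← hw, transitionMap_mk]
    have h2 : w ∈ (a ^ n • ⊤ : Submodule R R) := by
      rw [← Submodule.Quotient.mk_eq_zero (a ^ n • ⊤ : Submodule R R)]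
      have h3 : (Submodule.Quotient.mk w : R ⧸ (a ^ n • ⊤ : Submodule R R)) = x.val n := by
        rw [← x.property (le_max_right m n), ← hw, transitionMap_mk]
      rw [h3]
      exact hx
    have hg0 : g w = 0 := by
      rw [hgdef, Submodule.mkQ_apply, Submodule.Quotient.mk_eq_zero]
      exact h2
    rw [map_val_apply, h1, LinearMap.reduceModIdeal_apply, val_zero_apply, hg0,
      Submodule.Quotient.mk_eq_zero]
    exact Submodule.zero_mem _
  obtain ⟨y, hy⟩ := (map_exact (Submodule.injective_subtype _) hexact
    (Submodule.mkQ_surjective _) x).mp hgx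
  obtain ⟨z, rfl⟩ := AdicCompletion.map_surjective a hp y
  rw [AdicCompletion.map_comp_apply] at hy
  set q : (Fin k → R) →ₗ[R] R := f ∘ₗ p with hqdef
  have hc : ∀ i : Fin k, q (Pi.single i 1) ∈ (a ^ n : Ideal R) := fun i =>
    (p (Pi.single i 1)).2
  have hkey : AdicCompletion.map a q z =
      ∑ i : Fin k, q (Pi.single i 1) • AdicCompletion.map a (LinearMap.proj i) z := by
    ext m
    obtain ⟨w, hw⟩ := Submodule.Quotient.mk_surjective _ (z.val m)
    have hw2 : w = ∑ i : Fin k, w i • (Pi.single i (1 : R) : Fin k → R) := by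
      conv_lhs => rw [← Finset.univ_sum_single w]
      refine Finset.sum_congr rfl fun i _ => ?_
      rw [← Pi.single_smul, smul_eq_mul, mul_one]
    have hqw : q w = ∑ i : Fin k, w i • q (Pi.single i 1) := by
      conv_lhs => rw [hw2]
      rw [map_sum]
      exact Finset.sum_congr rfl fun i _ => map_smul q _ _
    rw [val_sum_apply, map_val_apply, ← hw, LinearMap.reduceModIdeal_apply, hqw,
      ← Submodule.mkQ_apply, map_sum]
    refine Finset.sum_congr rfl fun i _ => ?_
    rw [val_smul_apply, map_val_apply, ← hw, LinearMap.reduceModIdeal_apply]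
    have : w i • q (Pi.single i 1) = q (Pi.single i 1) • w i := by
      rw [smul_eq_mul, smul_eq_mul, mul_comm]
    rw [Submodule.mkQ_apply, this, Submodule.Quotient.mk_smul]
    rfl
  rw [← hy, hkey]
  exact Submodule.sum_mem _ fun i _ =>
    Submodule.smul_mem_smul (hc i) Submodule.mem_top

end KerEval

variable {M : Type u} [AddCommGroup M] [Module R M]

theorem smul_torsion_eq_zero {n : ℕ} {m : M} (hm : ∀ c ∈ a ^ n, c • m = 0)
    {s : R} (hs : s ∈ (a ^ n • ⊤ : Submodule R R)) : s • m = 0 := by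
  refine Submodule.smul_induction_on hs (fun c hc z _ => ?_) (fun u v hu hv => ?_)
  · have h1 : c • z = z * c := by rw [smul_eq_mul, mul_comm]
    rw [h1, mul_smul, hm c hc, smul_zero]
  · rw [add_smul, hu, hv, add_zero]

variable (htor : IsAdicTorsion R a M)

/-- A torsion exponent for `m`. -/
def torN (m : M) : ℕ := (htor m).choose

theorem torN_spec (m : M) : ∀ c ∈ a ^ torN htor m, c • m = 0 := (htor m).choose_spec

/-- A representative in `R` of the `n`-th component of `x : R̂`. -/
def rep (x : AdicCompletion a R) (n : ℕ) : R :=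
  (Submodule.Quotient.mk_surjective (a ^ n • ⊤ : Submodule R R) (eval a R n x)).choose

theorem rep_spec (x : AdicCompletion a R) (n : ℕ) :
    (Submodule.Quotient.mk (rep x n) : R ⧸ (a ^ n • ⊤ : Submodule R R)) = eval a R n x :=
  (Submodule.Quotient.mk_surjective (a ^ n • ⊤ : Submodule R R) (eval a R n x)).choose_spec

/-- The scalar multiplication of `R̂` on an `a`-torsion module. -/
def sm (x : AdicCompletion a R) (m : M) : M := rep x (torN htor m) • m

theorem sm_eq (x : AdicCompletion a R) (m : M) {n : ℕ} {r : R}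
    (hm : ∀ c ∈ a ^ n, c • m = 0)
    (hr : (Submodule.Quotient.mk r : R ⧸ (a ^ n • ⊤ : Submodule R R)) = eval a R n x) :
    sm htor x m = r • m := by
  set n₀ := torN htor m with hn₀
  set k := max n n₀ with hk
  set r' := rep x k with hr'
  have key : ∀ (l : ℕ) (hl : l ≤ k) (s : R),
      (Submodule.Quotient.mk s : R ⧸ (a ^ l • ⊤ : Submodule R R)) = eval a R l x →
      (∀ c ∈ a ^ l, c • m = 0) → r' • m = s • m := by
    intro l hl s hs hml
    have h1 : (Submodule.Quotient.mk r' : R ⧸ (a ^ l • ⊤ : Submodule R R)) = eval a R l x := by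
      rw [← eval_transition hl x, ← rep_spec x k, ← hr', transitionMap_mk]
    have h2 : r' - s ∈ (a ^ l • ⊤ : Submodule R R) :=
      (Submodule.Quotient.eq _).mp (h1.trans hs.symm)
    have h3 : (r' - s) • m = 0 := smul_torsion_eq_zero hml h2
    rw [sub_smul, sub_eq_zero] at h3
    exact h3
  have e1 : r' • m = r • m := key n (le_max_left _ _) r hr hm
  have e2 : r' • m = rep x n₀ • m :=
    key n₀ (le_max_right _ _) (rep x n₀) (rep_spec x n₀) (torN_spec htor m)
  show rep x n₀ • m = r • m
  rw [← e2, e1]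

theorem sm_add_m (x : AdicCompletion a R) (m m' : M) :
    sm htor x (m + m') = sm htor x m + sm htor x m' := by
  set N := max (torN htor m) (torN htor m') with hN
  have hm : ∀ c ∈ a ^ N, c • m = 0 := fun c hc =>
    torN_spec htor m c (Ideal.pow_le_pow_right (le_max_left _ _) hc)
  have hm' : ∀ c ∈ a ^ N, c • m' = 0 := fun c hc =>
    torN_spec htor m' c (Ideal.pow_le_pow_right (le_max_right _ _) hc)
  have hmm' : ∀ c ∈ a ^ N, c • (m + m') = 0 := fun c hc => by
    rw [smul_add, hm c hc, hm' c hc, add_zero]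
  rw [sm_eq htor x (m + m') hmm' (rep_spec x N), sm_eq htor x m hm (rep_spec x N),
    sm_eq htor x m' hm' (rep_spec x N), smul_add]

theorem sm_smul_m (x : AdicCompletion a R) (c : R) (m : M) :
    sm htor x (c • m) = c • sm htor x m := by
  set n := torN htor m with hn
  have hcm : ∀ d ∈ a ^ n, d • (c • m) = 0 := fun d hd => by
    rw [smul_comm, torN_spec htor m d hd, smul_zero]
  rw [sm_eq htor x (c • m) hcm (rep_spec x n), sm_eq htor x m (torN_spec htor m) (rep_spec x n),
    smul_comm]

theorem sm_add_x (x y : AdicCompletion a R) (m : M) :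
    sm htor (x + y) m = sm htor x m + sm htor y m := by
  set n := torN htor m with hn
  have hr : (Submodule.Quotient.mk (rep x n + rep y n) :
      R ⧸ (a ^ n • ⊤ : Submodule R R)) = eval a R n (x + y) := by
    rw [Submodule.Quotient.mk_add, rep_spec, rep_spec, map_add]
  rw [sm_eq htor (x + y) m (torN_spec htor m) hr,
    sm_eq htor x m (torN_spec htor m) (rep_spec x n),
    sm_eq htor y m (torN_spec htor m) (rep_spec y n), add_smul]

theorem sm_zero_x (m : M) : sm htor (0 : AdicCompletion a R) m = 0 := by
  set n := torN htor m with hn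
  have hr : (Submodule.Quotient.mk (0 : R) :
      R ⧸ (a ^ n • ⊤ : Submodule R R)) = eval a R n (0 : AdicCompletion a R) := by
    rw [Submodule.Quotient.mk_zero, _root_.map_zero]
  rw [sm_eq htor 0 m (torN_spec htor m) hr, zero_smul]

theorem eval_one (n : ℕ) :
    (Submodule.Quotient.mk (1 : R) : R ⧸ (a ^ n • ⊤ : Submodule R R)) =
      eval a R n (1 : AdicCompletion a R) := by
  rw [Ideal.Quotient.mk_eq_mk, map_one]
  rfl

theorem sm_one (m : M) : sm htor (1 : AdicCompletion a R) m = m := by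
  rw [sm_eq htor 1 m (torN_spec htor m) (eval_one _), one_smul]

theorem eval_mul (n : ℕ) (x y : AdicCompletion a R) :
    (Submodule.Quotient.mk (rep x n * rep y n) : R ⧸ (a ^ n • ⊤ : Submodule R R)) =
      eval a R n (x * y) := by
  have : eval a R n (x * y) = eval a R n x * eval a R n y := rfl
  rw [this, ← rep_spec x n, ← rep_spec y n, Ideal.Quotient.mk_eq_mk,
    Ideal.Quotient.mk_eq_mk, Ideal.Quotient.mk_eq_mk, map_mul]

theorem sm_mul (x y : AdicCompletion a R) (m : M) :
    sm htor (x * y) m = sm htor x (sm htor y m) := by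
  set n := torN htor m with hn
  have h1 : sm htor (x * y) m = (rep x n * rep y n) • m :=
    sm_eq htor (x * y) m (torN_spec htor m) (eval_mul n x y)
  have h2 : sm htor y m = rep y n • m :=
    sm_eq htor y m (torN_spec htor m) (rep_spec y n)
  have hsm : ∀ c ∈ a ^ n, c • (rep y n • m) = 0 := fun c hc => by
    rw [smul_comm, torN_spec htor m c hc, smul_zero]
  have h3 : sm htor x (rep y n • m) = rep x n • (rep y n • m) :=
    sm_eq htor x _ hsm (rep_spec x n)
  rw [h1, h2, h3, mul_smul]

theorem eval_algebraMap (n : ℕ) (c : R) :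
    eval a R n (algebraMap R (AdicCompletion a R) c) =
      (Submodule.Quotient.mk c : R ⧸ (a ^ n • ⊤ : Submodule R R)) :=
  rfl

theorem sm_algebraMap (c : R) (m : M) :
    sm htor (algebraMap R (AdicCompletion a R) c) m = c • m :=
  sm_eq htor _ m (torN_spec htor m) (eval_algebraMap _ c).symm

/-- The `R`-algebra morphism `R̂ →ₐ[R] End_R(M)` extending the action of `R`. -/
def phi : AdicCompletion a R →ₐ[R] Module.End R M where
  toFun x :=
    { toFun := sm htor x
      map_add' := sm_add_m htor x
      map_smul' := fun c m => sm_smul_m htor x c m }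
  map_one' := LinearMap.ext fun m => sm_one htor m
  map_mul' x y := LinearMap.ext fun m => sm_mul htor x y m
  map_zero' := LinearMap.ext fun m => sm_zero_x htor m
  map_add' x y := LinearMap.ext fun m => sm_add_x htor x y m
  commutes' c := LinearMap.ext fun m => by
    show sm htor (algebraMap R (AdicCompletion a R) c) m = _
    rw [sm_algebraMap htor c m, Module.algebraMap_end_apply]

theorem phi_apply (x : AdicCompletion a R) (m : M) : phi htor x m = sm htor x m := rfl

section Unique

variable [IsNoetherianRing R]

theorem sub_algebraMap_mem (x : AdicCompletion a R) {n : ℕ} {r : R}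
    (hr : (Submodule.Quotient.mk r : R ⧸ (a ^ n • ⊤ : Submodule R R)) = eval a R n x) :
    x - algebraMap R (AdicCompletion a R) r ∈
      (a ^ n • ⊤ : Submodule R (AdicCompletion a R)) := by
  apply ker_eval_le
  rw [map_sub, eval_algebraMap, hr, sub_self]

/-- Any `R`-algebra morphism `R̂ →ₐ[R] End_R(M)` is given by the canonical action. -/
theorem alghom_apply (ψ : AdicCompletion a R →ₐ[R] Module.End R M)
    (x : AdicCompletion a R) (m : M) {n : ℕ} {r : R}
    (hm : ∀ c ∈ a ^ n, c • m = 0)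
    (hr : (Submodule.Quotient.mk r : R ⧸ (a ^ n • ⊤ : Submodule R R)) = eval a R n x) :
    ψ x m = r • m := by
  have hy : x - algebraMap R (AdicCompletion a R) r ∈
      (a ^ n • ⊤ : Submodule R (AdicCompletion a R)) := sub_algebraMap_mem x hr
  have h0 : ψ (x - algebraMap R (AdicCompletion a R) r) m = 0 := by
    refine Submodule.smul_induction_on hy (fun c hc z _ => ?_) (fun u v hu hv => ?_)
    · have h1 : ψ (c • z) = c • ψ z := map_smul ψ.toLinearMap c z
      rw [h1, LinearMap.smul_apply, ← map_smul (ψ z) c m, hm c hc, _root_.map_zero]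
    · rw [map_add, LinearMap.add_apply, hu, hv, add_zero]
  have hx : algebraMap R (AdicCompletion a R) r +
      (x - algebraMap R (AdicCompletion a R) r) = x := by ring
  calc ψ x m = ψ (algebraMap R (AdicCompletion a R) r) m
        + ψ (x - algebraMap R (AdicCompletion a R) r) m := by
          rw [← LinearMap.add_apply, ← map_add, hx]
    _ = r • m := by
          rw [h0, add_zero, AlgHom.commutes, Module.algebraMap_end_apply]

end Unique

end AdicTorsionAux

/-- Let `R` be commutative noetherian, `a` a proper ideal, and `M` an `a`-torsion `R`-module.
Then the `R`-module structure on `M` extends uniquely to a module structure over the `a`-adic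
completion `R̂` (equivalently, there is a unique `R`-algebra homomorphism
`R̂ → End_R(M)`), and if moreover `M` is injective over `R` then the natural map
`M → R̂ ⊗_R M` is an isomorphism. -/
theorem adicTorsion_module_structure_extends
    (R : Type u) [CommRing R] [IsNoetherianRing R] (a : Ideal R) (ha : a ≠ ⊤)
    (M : Type u) [AddCommGroup M] [Module R M] (htor : IsAdicTorsion R a M) :
    (∃! _ : AdicCompletion a R →ₐ[R] Module.End R M, True) ∧
    (Module.Injective R M →
      Function.Bijective ((TensorProduct.mk R (AdicCompletion a R) M) 1)) := by
  classical
  open AdicTorsionAux in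
  constructor
  · refine ⟨phi htor, trivial, ?_⟩
    intro ψ _
    refine AlgHom.ext fun x => LinearMap.ext fun m => ?_
    rw [alghom_apply ψ x m (torN_spec htor m) (rep_spec x (torN htor m)),
      alghom_apply (phi htor) x m (torN_spec htor m) (rep_spec x (torN htor m))]
  · intro _
    set ψ : AdicCompletion a R ⊗[R] M →ₗ[R] M :=
      TensorProduct.lift (phi htor).toLinearMap with hψ
    have hleft : ∀ m : M, ψ (TensorProduct.mk R (AdicCompletion a R) M 1 m) = m := by
      intro m
      show ψ ((1 : AdicCompletion a R) ⊗ₜ[R] m) = m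
      rw [hψ, TensorProduct.lift.tmul]
      show phi htor 1 m = m
      rw [map_one]
      rfl
    have hright : ∀ t : AdicCompletion a R ⊗[R] M,
        TensorProduct.mk R (AdicCompletion a R) M 1 (ψ t) = t := by
      intro t
      induction t using TensorProduct.induction_on with
      | zero => simp
      | tmul x m =>
        show (1 : AdicCompletion a R) ⊗ₜ[R] (ψ (x ⊗ₜ[R] m)) = x ⊗ₜ[R] m
        rw [hψ, TensorProduct.lift.tmul]
        show (1 : AdicCompletion a R) ⊗ₜ[R] (phi htor x m) = x ⊗ₜ[R] m
        have h1 : phi htor x m = rep x (torN htor m) • m :=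
          alghom_apply (phi htor) x m (torN_spec htor m) (rep_spec x (torN htor m))
        rw [h1]
        set n := torN htor m with hn
        set r := rep x n with hrdef
        have h3 : (1 : AdicCompletion a R) ⊗ₜ[R] (r • m) =
            (algebraMap R (AdicCompletion a R) r) ⊗ₜ[R] m := by
          rw [TensorProduct.tmul_smul, TensorProduct.smul_tmul',
            Algebra.algebraMap_eq_smul_one]
        have hy : x - algebraMap R (AdicCompletion a R) r ∈
            (a ^ n • ⊤ : Submodule R (AdicCompletion a R)) :=
          sub_algebraMap_mem x (rep_spec x n)
        have h2 : (x - algebraMap R (AdicCompletion a R) r) ⊗ₜ[R] m = 0 := by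
          refine Submodule.smul_induction_on hy (fun c hc z _ => ?_) (fun u v hu hv => ?_)
          · rw [TensorProduct.smul_tmul, torN_spec htor m c hc, TensorProduct.tmul_zero]
          · rw [TensorProduct.add_tmul, hu, hv, add_zero]
        rw [TensorProduct.sub_tmul] at h2
        rw [h3]
        exact (sub_eq_zero.mp h2).symm
      | add u v hu hv =>
        rw [map_add, map_add, hu, hv]
    exact ⟨Function.LeftInverse.injective hleft, fun t => ⟨ψ t, hright t⟩⟩

end
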